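/- Let C₀ = ∏ᵢ [aᵢ, bᵢ] ⊆ ℝᵈ and let C = ∏ᵢ [cᵢ, dᵢ] ⊆ C₀ be a sub-box satisfying dᵢ − cᵢ < bᵢ − aᵢ for every i. Define p ∈ ℝᵈ coordinatewise by: pᵢ = cᵢ if cᵢ = aᵢ; pᵢ = dᵢ if dᵢ = bᵢ; and pᵢ = (cᵢ + dᵢ)/2 otherwise. Let f be differentiable on an open convex set U containing C₀ with L₂-Lipschitz gradient on U (L₂ ≥ 0), and suppose x* ∈ C is a global minimizer of f over C₀. Then f(p) ≤ f(x*) + (L₂/2)·Σᵢ max{(pᵢ − cᵢ)², (pᵢ − dᵢ)²}. (Validity of the constrained-qBnB(2) quasi-lower bound.) -/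

import Mathlib

open Set Finset

lemma onesided_nonneg (φ : ℝ → ℝ) (m ε : ℝ) (hφ : HasDerivAt φ m 0) (hε : 0 < ε)
    (h : ∀ t ∈ Set.Ioc 0 ε, φ 0 ≤ φ t) : 0 ≤ m := by
  have h1 : Filter.Tendsto (slope φ 0) (nhdsWithin 0 (Set.Ioi 0)) (nhds m) :=
    (hasDerivAt_iff_tendsto_slope.mp hφ).mono_left
      (nhdsWithin_mono 0 (fun t ht => ne_of_gt ht))
  refine ge_of_tendsto h1 ?_
  filter_upwards [Ioc_mem_nhdsGT_of_mem ⟨le_refl 0, hε⟩] with t ht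
  rw [slope_def_field]
  exact div_nonneg (by linarith [h t ht]) (by linarith [ht.1])

lemma fderiv_eq_inner_gradient {F : Type*} [NormedAddCommGroup F] [InnerProductSpace ℝ F]
    [CompleteSpace F] (f : F → ℝ) (x v : F) : fderiv ℝ f x v = inner ℝ (gradient f x) v := by
  rw [gradient, ← InnerProductSpace.toDual_apply_apply]; simp

lemma hasDerivAt_line {F : Type*} [NormedAddCommGroup F] [NormedSpace ℝ F]
    {f : F → ℝ} {x w : F} {t : ℝ} (hf : HasFDerivAt f (fderiv ℝ f (x + t • w)) (x + t • w)) :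
    HasDerivAt (fun s : ℝ => f (x + s • w)) (fderiv ℝ f (x + t • w) w) t := by
  have h1 : HasDerivAt (fun s : ℝ => x + s • w) w t := by
    simpa using ((hasDerivAt_id t).smul_const w).const_add x
  exact hf.comp_hasDerivAt t h1

theorem constrained_qBnB2_quasi_lower_bound
    (n : ℕ) (a b c d p : EuclideanSpace ℝ (Fin n))
    (hac : ∀ i, a i ≤ c i) (hcd : ∀ i, c i ≤ d i) (hdb : ∀ i, d i ≤ b i)
    (hstrict : ∀ i, d i - c i < b i - a i)
    (hp : ∀ i, p i = if c i = a i then c i else if d i = b i then d i else (c i + d i) / 2)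
    {U : Set (EuclideanSpace ℝ (Fin n))} (hUopen : IsOpen U) (hUconv : Convex ℝ U)
    (hC₀U : {x : EuclideanSpace ℝ (Fin n) | ∀ i, a i ≤ x i ∧ x i ≤ b i} ⊆ U)
    {f : EuclideanSpace ℝ (Fin n) → ℝ} (hdiff : DifferentiableOn ℝ f U)
    {L₂ : ℝ} (hL₂ : 0 ≤ L₂)
    (hLip : ∀ x ∈ U, ∀ y ∈ U, ‖gradient f x - gradient f y‖ ≤ L₂ * ‖x - y‖)
    (xstar : EuclideanSpace ℝ (Fin n))
    (hxC : ∀ i, c i ≤ xstar i ∧ xstar i ≤ d i)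
    (hmin : ∀ x : EuclideanSpace ℝ (Fin n), (∀ i, a i ≤ x i ∧ x i ≤ b i) → f xstar ≤ f x) :
    f p ≤ f xstar + L₂ / 2 * ∑ i, max ((p i - c i) ^ 2) ((p i - d i) ^ 2) := by
  classical
  -- basic memberships
  have hxC₀ : ∀ i, a i ≤ xstar i ∧ xstar i ≤ b i :=
    fun i => ⟨(hac i).trans (hxC i).1, (hxC i).2.trans (hdb i)⟩
  have hpC : ∀ i, c i ≤ p i ∧ p i ≤ d i := by
    intro i
    rw [hp i]
    split_ifs with h1 h2
    · exact ⟨le_refl _, hcd i⟩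
    · exact ⟨hcd i, le_refl _⟩
    · constructor <;> [linarith [hcd i]; linarith [hcd i]]
  have hpC₀ : ∀ i, a i ≤ p i ∧ p i ≤ b i :=
    fun i => ⟨(hac i).trans (hpC i).1, (hpC i).2.trans (hdb i)⟩
  have hxU : xstar ∈ U := hC₀U hxC₀
  have hpU : p ∈ U := hC₀U hpC₀
  set g := gradient f xstar with hg
  set v : EuclideanSpace ℝ (Fin n) := p - xstar with hv
  -- differentiability at points of U
  have hfd : ∀ x ∈ U, HasFDerivAt f (fderiv ℝ f x) x := fun x hx =>
    (hdiff.differentiableAt (hUopen.mem_nhds hx)).hasFDerivAt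
  -- Step A: KKT, coordinatewise
  have hKKT : ∀ i, g i * (p i - xstar i) = 0 := by
    intro i
    -- directional derivative along w at xstar
    have hdir : ∀ w : EuclideanSpace ℝ (Fin n),
        HasDerivAt (fun s : ℝ => f (xstar + s • w)) (inner ℝ g w : ℝ) 0 := by
      intro w
      have h0 : xstar + (0:ℝ) • w = xstar := by simp
      have := hasDerivAt_line (f := f) (x := xstar) (w := w) (t := 0)
        (by rw [h0]; exact hfd xstar hxU)
      rw [h0, fderiv_eq_inner_gradient] at this
      exact this
    -- if xstar i < b i then 0 ≤ g i
    have hpos : xstar i < b i → 0 ≤ g i := by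
      intro hib
      have hw : (inner ℝ g (EuclideanSpace.single i (1:ℝ)) : ℝ) = g i := by
        simp [real_inner_comm, EuclideanSpace.inner_single_left]
      have := onesided_nonneg _ _ (b i - xstar i) (hdir (EuclideanSpace.single i 1))
        (by linarith) ?_
      · rw [hw] at this; simpa using this
      · intro t ht
        rw [show xstar + (0:ℝ) • EuclideanSpace.single i (1:ℝ) = xstar by simp]
        apply hmin
        intro j
        by_cases hji : j = i
        · subst hji
          simp [EuclideanSpace.single_apply]
          constructor
          · linarith [(hxC₀ j).1, ht.1]
          · linarith [ht.2]
        · simp [EuclideanSpace.single_apply, hji]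
          exact hxC₀ j
    -- if a i < xstar i then g i ≤ 0
    have hneg : a i < xstar i → g i ≤ 0 := by
      intro hia
      have hw : (inner ℝ g (-EuclideanSpace.single i (1:ℝ)) : ℝ) = -g i := by
        simp [real_inner_comm, EuclideanSpace.inner_single_left]
      have := onesided_nonneg _ _ (xstar i - a i) (hdir (-EuclideanSpace.single i 1))
        (by linarith) ?_
      · rw [hw] at this; linarith
      · intro t ht
        rw [show xstar + (0:ℝ) • (-EuclideanSpace.single i (1:ℝ)) = xstar by simp]
        apply hmin
        intro j
        by_cases hji : j = i
        · subst hji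
          simp [EuclideanSpace.single_apply]
          constructor
          · linarith [ht.2]
          · linarith [(hxC₀ j).2, ht.1]
        · simp [EuclideanSpace.single_apply, hji]
          exact hxC₀ j
    rcases lt_trichotomy (g i) 0 with hgi | hgi | hgi
    · -- g i < 0 : xstar i = b i, hence d i = b i, c i ≠ a i, p i = d i = xstar i
      have hxb : xstar i = b i := by
        by_contra hne
        exact absurd (hpos (lt_of_le_of_ne (hxC₀ i).2 hne)) (not_le.mpr hgi)
      have hdbi : d i = b i := le_antisymm (hdb i) (hxb ▸ (hxC i).2)
      have hca : c i ≠ a i := by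
        intro hca; have := hstrict i; rw [hca, hdbi] at this; exact absurd this (lt_irrefl _)
      have hxdi : xstar i = d i := hdbi.symm ▸ hxb
      rw [hp i, if_neg hca, if_pos hdbi, hxdi, sub_self, mul_zero]
    · rw [hgi, zero_mul]
    · have hxa : xstar i = a i := by
        by_contra hne
        have : a i < xstar i := lt_of_le_of_ne (hxC₀ i).1 (Ne.symm hne)
        exact absurd (hneg this) (not_le.mpr hgi)
      have hcai : c i = a i := le_antisymm (hxa ▸ (hxC i).1) (hac i)
      have hxci : xstar i = c i := hcai.symm ▸ hxa
      rw [hp i, if_pos hcai, hxci, sub_self, mul_zero]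
  -- inner product ⟪g, v⟫ = 0
  have hinner : (inner ℝ g v : ℝ) = 0 := by
    rw [hv, PiLp.inner_apply]
    apply Finset.sum_eq_zero
    intro i _
    have := hKKT i
    simp only [PiLp.sub_apply] at *
    simp [RCLike.inner_apply, conj_trivial] at this ⊢
    tauto
  -- Step B: descent lemma
  have hseg : ∀ t ∈ Icc (0:ℝ) 1, xstar + t • v ∈ U := by
    intro t ht
    have : xstar + t • v = (1 - t) • xstar + t • p := by
      rw [hv]; module
    rw [this]
    exact hUconv hxU hpU (by linarith [ht.1, ht.2]) ht.1 (by linarith)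
  set φ : ℝ → ℝ := fun t => f (xstar + t • v) - t * (inner ℝ g v : ℝ) - L₂ / 2 * ‖v‖ ^ 2 * t ^ 2
    with hφ
  have hφderiv : ∀ t ∈ Icc (0:ℝ) 1, HasDerivAt φ
      ((inner ℝ (gradient f (xstar + t • v)) v : ℝ) - (inner ℝ g v : ℝ) - L₂ * ‖v‖ ^ 2 * t) t := by
    intro t ht
    have h1 : HasDerivAt (fun s : ℝ => f (xstar + s • v)) (fderiv ℝ f (xstar + t • v) v) t :=
      hasDerivAt_line (hfd _ (hseg t ht))
    rw [fderiv_eq_inner_gradient] at h1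
    have h2 : HasDerivAt (fun s : ℝ => s * (inner ℝ g v : ℝ)) (inner ℝ g v : ℝ) t := by
      simpa using (hasDerivAt_id t).mul_const (inner ℝ g v : ℝ)
    have h3 : HasDerivAt (fun s : ℝ => L₂ / 2 * ‖v‖ ^ 2 * s ^ 2) (L₂ * ‖v‖ ^ 2 * t) t := by
      have := ((hasDerivAt_pow 2 t).const_mul (L₂ / 2 * ‖v‖ ^ 2))
      refine this.congr_deriv ?_
      ring
    exact (h1.sub h2).sub h3
  have hφanti : φ 1 ≤ φ 0 := by
    have hcont : ContinuousOn φ (Icc 0 1) :=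
      fun t ht => ((hφderiv t ht).continuousAt).continuousWithinAt
    have hmono : AntitoneOn φ (Icc 0 1) := by
      apply antitoneOn_of_deriv_nonpos (convex_Icc 0 1) hcont
      · intro t ht
        rw [interior_Icc] at ht
        exact ((hφderiv t ⟨le_of_lt ht.1, le_of_lt ht.2⟩)).differentiableAt.differentiableWithinAt
      · intro t ht
        rw [interior_Icc] at ht
        have ht' : t ∈ Icc (0:ℝ) 1 := ⟨le_of_lt ht.1, le_of_lt ht.2⟩
        rw [(hφderiv t ht').deriv]
        have hib : (inner ℝ (gradient f (xstar + t • v) - g) v : ℝ) ≤ L₂ * ‖v‖ ^ 2 * t := by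
          calc (inner ℝ (gradient f (xstar + t • v) - g) v : ℝ)
              ≤ ‖gradient f (xstar + t • v) - g‖ * ‖v‖ := real_inner_le_norm _ _
            _ ≤ (L₂ * ‖xstar + t • v - xstar‖) * ‖v‖ := by
                apply mul_le_mul_of_nonneg_right _ (norm_nonneg _)
                exact hLip _ (hseg t ht') _ hxU
            _ = L₂ * ‖v‖ ^ 2 * t := by
                rw [show xstar + t • v - xstar = t • v by abel]
                rw [norm_smul, Real.norm_eq_abs, abs_of_pos ht.1]
                ring
        rw [inner_sub_left] at hib
        linarith
    exact hmono (by norm_num) (by norm_num) (by norm_num)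
  have hdescent : f p ≤ f xstar + (inner ℝ g v : ℝ) + L₂ / 2 * ‖v‖ ^ 2 := by
    have h0 : φ 0 = f xstar := by simp [hφ]
    have h1 : φ 1 = f p - (inner ℝ g v : ℝ) - L₂ / 2 * ‖v‖ ^ 2 := by
      simp [hφ, hv]
    rw [h0, h1] at hφanti
    linarith
  rw [hinner] at hdescent
  -- Step D: bound the norm
  have hnorm : ‖v‖ ^ 2 ≤ ∑ i, max ((p i - c i) ^ 2) ((p i - d i) ^ 2) := by
    rw [EuclideanSpace.norm_eq, Real.sq_sqrt (by positivity)]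
    apply Finset.sum_le_sum
    intro i _
    rw [Real.norm_eq_abs, sq_abs]
    have h1 := (hxC i).1
    have h2 := (hxC i).2
    simp only [hv, PiLp.sub_apply]
    rcases le_total (p i) (xstar i) with h3 | h3
    · exact le_max_of_le_right (by nlinarith)
    · exact le_max_of_le_left (by nlinarith)
  nlinarith [hnorm]
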